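/- Let s > 2 and let a, b be positive integers with s = lcm(a, b). Then the subgroup H = ⟨u^a, v^b⟩ of G is core-free and has index 8ab in G. -/

import Mathlib

lemma mem_closure_pair {G : Type*} [Group G] {x y : G} (h : Commute x y) (g : G) :
    g ∈ Subgroup.closure {x, y} ↔ ∃ i j : ℤ, g = x ^ i * y ^ j := by
  constructor
  · intro hg
    induction hg using Subgroup.closure_induction_left with
    | one => exact ⟨0, 0, by simp⟩
    | mul_left z hz w hw ih =>
      obtain ⟨i, j, rfl⟩ := ih
      simp only [Set.mem_insert_iff, Set.mem_singleton_iff] at hz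
      rcases hz with rfl | rfl
      · exact ⟨i + 1, j, by group⟩
      · refine ⟨i, j + 1, ?_⟩
        rw [← mul_assoc, ((h.symm.zpow_right i).eq : z * x ^ i = x ^ i * z)]
        group
    | inv_mul_cancel z hz w hw ih =>
      obtain ⟨i, j, rfl⟩ := ih
      simp only [Set.mem_insert_iff, Set.mem_singleton_iff] at hz
      rcases hz with rfl | rfl
      · exact ⟨i - 1, j, by group⟩
      · refine ⟨i, j - 1, ?_⟩
        rw [← mul_assoc, (((h.symm.zpow_right i).inv_left).eq : z⁻¹ * x ^ i = x ^ i * z⁻¹)]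
        group
  · rintro ⟨i, j, rfl⟩
    exact mul_mem (zpow_mem (Subgroup.subset_closure (by simp)) i)
      (zpow_mem (Subgroup.subset_closure (by simp)) j)

lemma zpow_emod_eq {G : Type*} [Group G] {x : G} {n : ℕ} (hx : x ^ n = 1) (i : ℤ) :
    x ^ i = x ^ (i % (n : ℤ)) := by
  conv_lhs => rw [← Int.emod_add_mul_ediv i (n : ℤ)]
  rw [zpow_add, zpow_mul, zpow_natCast, hx, one_zpow, mul_one]

lemma conj_mul_zpow {G : Type*} [Group G] (g x y : G) (i j : ℤ) :
    g * (x ^ i * y ^ j) * g⁻¹ = (g * x * g⁻¹) ^ i * (g * y * g⁻¹) ^ j := by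
  calc g * (x ^ i * y ^ j) * g⁻¹ = (MulAut.conj g) (x ^ i * y ^ j) := by
        simp [MulAut.conj_apply, mul_assoc]
    _ = ((MulAut.conj g) x) ^ i * ((MulAut.conj g) y) ^ j := by
        rw [map_mul, map_zpow, map_zpow]
    _ = _ := by simp [MulAut.conj_apply, mul_assoc]

lemma conj_pow' {G : Type*} [Group G] (g x : G) (n : ℕ) :
    g * x ^ n * g⁻¹ = (g * x * g⁻¹) ^ n := by
  calc g * x ^ n * g⁻¹ = (MulAut.conj g) (x ^ n) := by simp [MulAut.conj_apply, mul_assoc]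
    _ = ((MulAut.conj g) x) ^ n := map_pow _ _ _
    _ = _ := by simp [MulAut.conj_apply, mul_assoc]

lemma aux_cancel {G : Type*} [Group G] {x y : G} (h : Commute x y) {p q r t : ℤ}
    (e : x ^ p * y ^ q = x ^ r * y ^ t) : x ^ (p - r) * y ^ (q - t) = 1 := by
  calc x ^ (p - r) * y ^ (q - t)
      = x ^ p * (x ^ (-r) * y ^ q) * y ^ (-t) := by rw [zpow_sub, zpow_sub]; group
    _ = x ^ p * (y ^ q * x ^ (-r)) * y ^ (-t) := by rw [(h.zpow_zpow (-r) q).eq]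
    _ = (x ^ p * y ^ q) * (x ^ (-r) * y ^ (-t)) := by group
    _ = (x ^ r * y ^ t) * (x ^ (-r) * y ^ (-t)) := by rw [e]
    _ = x ^ r * (y ^ t * x ^ (-r)) * y ^ (-t) := by group
    _ = x ^ r * (x ^ (-r) * y ^ t) * y ^ (-t) := by rw [(h.zpow_zpow (-r) t).eq]
    _ = 1 := by group

theorem stmt5 (s a b : ℕ) (hs : 2 < s) (ha : 0 < a) (hb : 0 < b)
    (hlcm : s = Nat.lcm a b)
    (G : Type*) [Group G] [Finite G] (ρ0 ρ1 ρ2 : G)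
    (hgen : Subgroup.closure {ρ0, ρ1, ρ2} = ⊤)
    (hr0 : ρ0 ^ 2 = 1) (hr1 : ρ1 ^ 2 = 1) (hr2 : ρ2 ^ 2 = 1)
    (h01 : (ρ0 * ρ1) ^ 4 = 1) (h12 : (ρ1 * ρ2) ^ 4 = 1) (h02 : (ρ0 * ρ2) ^ 2 = 1)
    (hmap : (ρ0 * ρ1 * ρ2 * ρ1) ^ s = 1)
    (hG : Nat.card G = 8 * s ^ 2)
    (u v : G) (hu : u = ρ0 * ρ1 * ρ2 * ρ1) (hv : v = ρ1 * u * ρ1)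
    : (Subgroup.closure {u ^ a, v ^ b}).normalCore = ⊥ ∧
      (Subgroup.closure {u ^ a, v ^ b}).index = 8 * a * b := by
  have spos : 0 < s := by omega
  have hsZ : ((s : ℤ)) ≠ 0 := by exact_mod_cast spos.ne'
  -- basic involution facts
  have i0 : ρ0 * ρ0 = 1 := by rw [← pow_two]; exact hr0
  have i1 : ρ1 * ρ1 = 1 := by rw [← pow_two]; exact hr1
  have i2 : ρ2 * ρ2 = 1 := by rw [← pow_two]; exact hr2
  have n0 : ρ0⁻¹ = ρ0 := inv_eq_of_mul_eq_one_right i0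
  have n1 : ρ1⁻¹ = ρ1 := inv_eq_of_mul_eq_one_right i1
  have n2 : ρ2⁻¹ = ρ2 := inv_eq_of_mul_eq_one_right i2
  have k0 : ∀ x : G, ρ0 * (ρ0 * x) = x := fun x => by rw [← mul_assoc, i0, one_mul]
  have k1 : ∀ x : G, ρ1 * (ρ1 * x) = x := fun x => by rw [← mul_assoc, i1, one_mul]
  have k2 : ∀ x : G, ρ2 * (ρ2 * x) = x := fun x => by rw [← mul_assoc, i2, one_mul]
  have s02n : ρ2 * ρ0 = ρ0 * ρ2 := by
    have e : (ρ0 * ρ2) * (ρ0 * ρ2) = 1 := by rw [← pow_two]; exact h02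
    calc ρ2 * ρ0 = (ρ0 * ρ2)⁻¹ := by rw [mul_inv_rev, n0, n2]
      _ = ρ0 * ρ2 := by rw [inv_eq_of_mul_eq_one_right e]
  have s02 : ∀ x : G, ρ2 * (ρ0 * x) = ρ0 * (ρ2 * x) := fun x => by
    rw [← mul_assoc, s02n, mul_assoc]
  have q01n : ρ1 * (ρ0 * (ρ1 * ρ0)) = ρ0 * (ρ1 * (ρ0 * ρ1)) := by
    have e : (ρ0 * ρ1) ^ 2 * (ρ0 * ρ1) ^ 2 = 1 := by rw [← pow_add]; exact h01
    have h := inv_eq_of_mul_eq_one_right e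
    simp only [pow_two, mul_inv_rev, n0, n1, mul_assoc] at h
    simpa [mul_assoc] using h
  have q01 : ∀ x : G, ρ1 * (ρ0 * (ρ1 * (ρ0 * x))) = ρ0 * (ρ1 * (ρ0 * (ρ1 * x))) := fun x => by
    have := congrArg (· * x) q01n
    simpa [mul_assoc] using this
  have q12n : ρ2 * (ρ1 * (ρ2 * ρ1)) = ρ1 * (ρ2 * (ρ1 * ρ2)) := by
    have e : (ρ1 * ρ2) ^ 2 * (ρ1 * ρ2) ^ 2 = 1 := by rw [← pow_add]; exact h12
    have h := inv_eq_of_mul_eq_one_right e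
    simp only [pow_two, mul_inv_rev, n1, n2, mul_assoc] at h
    simpa [mul_assoc] using h
  have q12 : ∀ x : G, ρ2 * (ρ1 * (ρ2 * (ρ1 * x))) = ρ1 * (ρ2 * (ρ1 * (ρ2 * x))) := fun x => by
    have := congrArg (· * x) q12n
    simpa [mul_assoc] using this
  -- key word identities
  have c0u : ρ0 * u * ρ0⁻¹ = u⁻¹ := by
    rw [hu]; simp only [mul_inv_rev, n0, n1, n2, mul_assoc, i0, i1, i2, k0, k1, k2,
      one_mul, mul_one, s02n, s02, q01n, q01, q12n, q12]
  have c0v : ρ0 * v * ρ0⁻¹ = v := by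
    rw [hv, hu]; simp only [mul_inv_rev, n0, n1, n2, mul_assoc, i0, i1, i2, k0, k1, k2,
      one_mul, mul_one, s02n, s02, q01n, q01, q12n, q12]
  have c1u : ρ1 * u * ρ1⁻¹ = v := by
    rw [hv, hu]; simp only [mul_inv_rev, n0, n1, n2, mul_assoc, i0, i1, i2, k0, k1, k2,
      one_mul, mul_one, s02n, s02, q01n, q01, q12n, q12]
  have c1v : ρ1 * v * ρ1⁻¹ = u := by
    rw [hv, hu]; simp only [mul_inv_rev, n0, n1, n2, mul_assoc, i0, i1, i2, k0, k1, k2,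
      one_mul, mul_one, s02n, s02, q01n, q01, q12n, q12]
  have c2u : ρ2 * u * ρ2⁻¹ = u := by
    rw [hu]; simp only [mul_inv_rev, n0, n1, n2, mul_assoc, i0, i1, i2, k0, k1, k2,
      one_mul, mul_one, s02n, s02, q01n, q01, q12n, q12]
  have c2v : ρ2 * v * ρ2⁻¹ = v⁻¹ := by
    rw [hv, hu]; simp only [mul_inv_rev, n0, n1, n2, mul_assoc, i0, i1, i2, k0, k1, k2,
      one_mul, mul_one, s02n, s02, q01n, q01, q12n, q12]
  have hcomm : u * v = v * u := by
    rw [hv, hu]; simp only [mul_inv_rev, n0, n1, n2, mul_assoc, i0, i1, i2, k0, k1, k2,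
      one_mul, mul_one, s02n, s02, q01n, q01, q12n, q12]
  have hρ2 : ρ2 = ρ1 * (ρ0 * (u * ρ1)) := by
    rw [hu]; simp only [mul_assoc, i0, i1, i2, k0, k1, k2, one_mul, mul_one]
  have hcommC : Commute u v := hcomm
  have hus : u ^ s = 1 := by rw [hu]; exact hmap
  have hvs : v ^ s = 1 := by
    calc v ^ s = (ρ1 * u * ρ1⁻¹) ^ s := by rw [hv, n1]
      _ = ρ1 * u ^ s * ρ1⁻¹ := (conj_pow' ρ1 u s).symm
      _ = 1 := by rw [hus, mul_one, n1, i1]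
  set TT := Subgroup.closure ({u, v} : Set G) with hTT
  have huT : u ∈ TT := Subgroup.subset_closure (by simp)
  have hvT : v ∈ TT := Subgroup.subset_closure (by simp)
  have memT : ∀ g : G, g ∈ TT ↔ ∃ i j : ℤ, g = u ^ i * v ^ j := mem_closure_pair hcommC
  -- conjugation stabilizes TT
  have hC0 : ∀ g ∈ TT, ρ0 * g * ρ0⁻¹ ∈ TT := by
    intro g hg
    obtain ⟨i, j, rfl⟩ := (memT g).mp hg
    rw [conj_mul_zpow, c0u, c0v]
    exact (memT _).mpr ⟨-i, j, by simp [zpow_neg, inv_zpow]⟩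
  have hC1 : ∀ g ∈ TT, ρ1 * g * ρ1⁻¹ ∈ TT := by
    intro g hg
    obtain ⟨i, j, rfl⟩ := (memT g).mp hg
    rw [conj_mul_zpow, c1u, c1v]
    exact (memT _).mpr ⟨j, i, ((hcommC.zpow_zpow j i).eq).symm⟩
  have hC2 : ∀ g ∈ TT, ρ2 * g * ρ2⁻¹ ∈ TT := by
    intro g hg
    obtain ⟨i, j, rfl⟩ := (memT g).mp hg
    rw [conj_mul_zpow, c2u, c2v]
    exact (memT _).mpr ⟨i, -j, by simp [zpow_neg, inv_zpow]⟩
  have hnormal : TT.Normal := by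
    apply Subgroup.normalizer_eq_top_iff.mp
    rw [← top_le_iff, ← hgen, Subgroup.closure_le]
    intro ρ hρ
    simp only [Set.mem_insert_iff, Set.mem_singleton_iff] at hρ
    have : (ρ ∈ Subgroup.normalizer (TT : Set G)) ↔ (∀ h : G, h ∈ TT ↔ ρ * h * ρ⁻¹ ∈ TT) :=
      Subgroup.mem_normalizer_iff
    rcases hρ with rfl | rfl | rfl
    · refine this.mpr fun h => ⟨fun hh => hC0 h hh, fun hh => ?_⟩
      have := hC0 _ hh
      simpa [n0, mul_assoc, i0, k0] using this
    · refine this.mpr fun h => ⟨fun hh => hC1 h hh, fun hh => ?_⟩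
      have := hC1 _ hh
      simpa [n1, mul_assoc, i1, k1] using this
    · refine this.mpr fun h => ⟨fun hh => hC2 h hh, fun hh => ?_⟩
      have := hC2 _ hh
      simpa [n2, mul_assoc, i2, k2] using this
  -- the eight coset representatives
  set WL : List G := [1, ρ0, ρ1, ρ0*ρ1, ρ1*ρ0, ρ0*ρ1*ρ0, ρ1*ρ0*ρ1, ρ0*ρ1*ρ0*ρ1] with hWL
  have hstep0 : ∀ w ∈ WL, ∃ w' ∈ WL, ρ0 * w = w' := by
    intro w hw
    rw [hWL] at hw
    fin_cases hw
    · exact ⟨ρ0, by simp [hWL], by simp⟩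
    · exact ⟨1, by simp [hWL], i0⟩
    · exact ⟨ρ0*ρ1, by simp [hWL], by simp [mul_assoc]⟩
    · exact ⟨ρ1, by simp [hWL], by simp only [mul_assoc, k0]⟩
    · exact ⟨ρ0*ρ1*ρ0, by simp [hWL], by simp [mul_assoc]⟩
    · exact ⟨ρ1*ρ0, by simp [hWL], by simp only [mul_assoc, k0]⟩
    · exact ⟨ρ0*ρ1*ρ0*ρ1, by simp [hWL], by simp [mul_assoc]⟩
    · exact ⟨ρ1*ρ0*ρ1, by simp [hWL], by simp only [mul_assoc, k0]⟩
  have hstep1 : ∀ w ∈ WL, ∃ w' ∈ WL, ρ1 * w = w' := by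
    intro w hw
    rw [hWL] at hw
    fin_cases hw
    · exact ⟨ρ1, by simp [hWL], by simp⟩
    · exact ⟨ρ1*ρ0, by simp [hWL], by simp [mul_assoc]⟩
    · exact ⟨1, by simp [hWL], i1⟩
    · exact ⟨ρ1*ρ0*ρ1, by simp [hWL], by simp [mul_assoc]⟩
    · exact ⟨ρ0, by simp [hWL], by simp only [mul_assoc, k1]⟩
    · exact ⟨ρ0*ρ1*ρ0*ρ1, by simp [hWL], by simpa [mul_assoc] using q01n⟩
    · exact ⟨ρ0*ρ1, by simp [hWL], by simp only [mul_assoc, k1]⟩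
    · exact ⟨ρ0*ρ1*ρ0, by simp [hWL], by
        simp only [mul_assoc, q01, i1, mul_one]⟩
  have hmulstep : ∀ z ∈ ({ρ0, ρ1, ρ2} : Set G), ∀ w ∈ WL, ∀ t ∈ TT,
      ∃ w' ∈ WL, ∃ t' ∈ TT, z * (w * t) = w' * t' := by
    have hstepu : ∀ w ∈ WL, ∀ t ∈ TT, ∃ t' ∈ TT, u * (w * t) = w * t' := by
      intro w _ t ht
      refine ⟨(w⁻¹ * u * w) * t, mul_mem ?_ ht, by group⟩
      have := hnormal.conj_mem u huT w⁻¹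
      simpa [inv_inv] using this
    have gen0 : ∀ w ∈ WL, ∀ t ∈ TT, ∃ w' ∈ WL, ∃ t' ∈ TT, ρ0 * (w * t) = w' * t' := by
      intro w hw t ht
      obtain ⟨w', hw', he⟩ := hstep0 w hw
      exact ⟨w', hw', t, ht, by rw [← mul_assoc, he]⟩
    have gen1 : ∀ w ∈ WL, ∀ t ∈ TT, ∃ w' ∈ WL, ∃ t' ∈ TT, ρ1 * (w * t) = w' * t' := by
      intro w hw t ht
      obtain ⟨w', hw', he⟩ := hstep1 w hw
      exact ⟨w', hw', t, ht, by rw [← mul_assoc, he]⟩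
    intro z hz w hw t ht
    simp only [Set.mem_insert_iff, Set.mem_singleton_iff] at hz
    rcases hz with h | h | h
    · rw [h]; exact gen0 w hw t ht
    · rw [h]; exact gen1 w hw t ht
    · rw [h]
      obtain ⟨w1, hw1, he1⟩ := hstep1 w hw
      obtain ⟨t1, ht1, he2⟩ := hstepu w1 hw1 t ht
      obtain ⟨w2, hw2, t2, ht2, he3⟩ := gen0 w1 hw1 t1 ht1
      obtain ⟨w3, hw3, he4⟩ := hstep1 w2 hw2
      refine ⟨w3, hw3, t2, ht2, ?_⟩
      calc ρ2 * (w * t) = ρ1 * (ρ0 * (u * (ρ1 * (w * t)))) := by rw [hρ2]; group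
        _ = ρ1 * (ρ0 * (u * (w1 * t))) := by rw [← mul_assoc ρ1 w t, he1]
        _ = ρ1 * (ρ0 * (w1 * t1)) := by rw [he2]
        _ = ρ1 * (w2 * t2) := by rw [he3]
        _ = ρ1 * w2 * t2 := by rw [mul_assoc]
        _ = w3 * t2 := by rw [he4]
  have hcover : ∀ g : G, ∃ w ∈ WL, ∃ t ∈ TT, g = w * t := by
    intro g
    have hg : g ∈ Subgroup.closure ({ρ0, ρ1, ρ2} : Set G) := by rw [hgen]; exact Subgroup.mem_top g
    induction hg using Subgroup.closure_induction_left with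
    | one => exact ⟨1, by simp [hWL], 1, one_mem _, by simp⟩
    | mul_left z hz y hy ih =>
      obtain ⟨w, hw, t, ht, rfl⟩ := ih
      obtain ⟨w', hw', t', ht', he⟩ := hmulstep z hz w hw t ht
      exact ⟨w', hw', t', ht', he.symm ▸ rfl⟩
    | inv_mul_cancel z hz y hy ih =>
      obtain ⟨w, hw, t, ht, rfl⟩ := ih
      have hzz : z⁻¹ = z := by
        simp only [Set.mem_insert_iff, Set.mem_singleton_iff] at hz
        rcases hz with rfl | rfl | rfl
        exacts [n0, n1, n2]
      obtain ⟨w', hw', t', ht', he⟩ := hmulstep z hz w hw t ht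
      exact ⟨w', hw', t', ht', by rw [hzz, he]⟩
  -- counting
  have hred : ∀ (x : G), x ^ s = 1 → ∀ i : ℤ, x ^ ((i % (s : ℤ)).toNat) = x ^ i := by
    intro x hx i
    rw [← zpow_natCast, Int.toNat_of_nonneg (Int.emod_nonneg i hsZ), ← zpow_emod_eq hx]
  have fTsurj : Function.Surjective
      (fun p : Fin s × Fin s => (⟨u ^ (p.1 : ℕ) * v ^ (p.2 : ℕ),
        mul_mem (pow_mem huT _) (pow_mem hvT _)⟩ : TT)) := by
    rintro ⟨g, hg⟩
    obtain ⟨i, j, rfl⟩ := (memT g).mp hg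
    have hi : 0 ≤ i % (s : ℤ) := Int.emod_nonneg i hsZ
    have hi' : i % (s : ℤ) < (s : ℤ) := Int.emod_lt_of_pos i (by exact_mod_cast spos)
    have hj : 0 ≤ j % (s : ℤ) := Int.emod_nonneg j hsZ
    have hj' : j % (s : ℤ) < (s : ℤ) := Int.emod_lt_of_pos j (by exact_mod_cast spos)
    refine ⟨(⟨(i % (s:ℤ)).toNat, by omega⟩, ⟨(j % (s:ℤ)).toNat, by omega⟩), ?_⟩
    exact Subtype.ext (by simp only; rw [hred u hus i, hred v hvs j])
  have hTle : Nat.card TT ≤ s * s := by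
    have := Nat.card_le_card_of_surjective _ fTsurj
    simpa [Nat.card_eq_fintype_card] using this
  have hψ : Function.Surjective
      (fun p : Fin WL.length × TT => WL.get p.1 * (p.2 : G)) := by
    intro g
    obtain ⟨w, hw, t, ht, rfl⟩ := hcover g
    obtain ⟨n, hn⟩ := List.mem_iff_get.mp hw
    exact ⟨(n, ⟨t, ht⟩), by show WL.get n * t = w * t; rw [hn]⟩
  have hGle : Nat.card G ≤ 8 * Nat.card TT := by
    have hle := Nat.card_le_card_of_surjective _ hψ
    have hlen : WL.length = 8 := by rw [hWL]; rfl
    rw [Nat.card_prod, Nat.card_eq_fintype_card (α := Fin WL.length), Fintype.card_fin, hlen]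
      at hle
    exact hle
  have hTcard : Nat.card TT = s * s := by
    have h1 : 8 * s ^ 2 ≤ 8 * Nat.card TT := hG ▸ hGle
    have h2 : s ^ 2 = s * s := by ring
    omega
  have fTbij := (Nat.bijective_iff_surjective_and_card _).mpr
    ⟨fTsurj, by simp [Nat.card_eq_fintype_card, hTcard]⟩
  -- the key independence property
  have key : ∀ i j : ℤ, u ^ i * v ^ j = 1 → ((s:ℤ) ∣ i ∧ (s:ℤ) ∣ j) := by
    intro i j hij
    have hi : 0 ≤ i % (s : ℤ) := Int.emod_nonneg i hsZ
    have hi' : i % (s : ℤ) < (s : ℤ) := Int.emod_lt_of_pos i (by exact_mod_cast spos)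
    have hj : 0 ≤ j % (s : ℤ) := Int.emod_nonneg j hsZ
    have hj' : j % (s : ℤ) < (s : ℤ) := Int.emod_lt_of_pos j (by exact_mod_cast spos)
    have hfeq := fTbij.1 (a₁ := (⟨(i % (s:ℤ)).toNat, by omega⟩, ⟨(j % (s:ℤ)).toNat, by omega⟩))
      (a₂ := (⟨0, spos⟩, ⟨0, spos⟩)) (Subtype.ext (by
        simp only
        rw [hred u hus i, hred v hvs j]
        simpa using hij))
    have e1 : (i % (s:ℤ)).toNat = 0 := congrArg Fin.val (congrArg Prod.fst hfeq)
    have e2 : (j % (s:ℤ)).toNat = 0 := congrArg Fin.val (congrArg Prod.snd hfeq)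
    constructor
    · exact Int.dvd_of_emod_eq_zero (by omega)
    · exact Int.dvd_of_emod_eq_zero (by omega)
  have huZ : u ^ ((s : ℤ)) = 1 := by rw [zpow_natCast]; exact hus
  have hvZ : v ^ ((s : ℤ)) = 1 := by rw [zpow_natCast]; exact hvs
  have hzero : ∀ (x : G), x ^ ((s:ℤ)) = 1 → ∀ m : ℤ, (s:ℤ) ∣ m → x ^ m = 1 := by
    rintro x hx m ⟨c, rfl⟩
    rw [zpow_mul, hx, one_zpow]
  -- the subgroup H
  have had : a ∣ s := hlcm ▸ Nat.dvd_lcm_left a b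
  have hbd : b ∣ s := hlcm ▸ Nat.dvd_lcm_right a b
  have hA : 0 < s / a := Nat.div_pos (Nat.le_of_dvd spos had) ha
  have hB : 0 < s / b := Nat.div_pos (Nat.le_of_dvd spos hbd) hb
  have huA : (u ^ a) ^ (s / a) = 1 := by rw [← pow_mul, Nat.mul_div_cancel' had, hus]
  have hvB : (v ^ b) ^ (s / b) = 1 := by rw [← pow_mul, Nat.mul_div_cancel' hbd, hvs]
  have commab : Commute (u ^ a) (v ^ b) := hcommC.pow_pow a b
  set HH := Subgroup.closure ({u ^ a, v ^ b} : Set G) with hHH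
  have memH : ∀ g : G, g ∈ HH ↔ ∃ i j : ℤ, g = (u ^ a) ^ i * (v ^ b) ^ j :=
    mem_closure_pair commab
  have huaH : u ^ a ∈ HH := Subgroup.subset_closure (by simp)
  have hvbH : v ^ b ∈ HH := Subgroup.subset_closure (by simp)
  -- uv-exponent conversion
  have hconv : ∀ (i j : ℤ), (u ^ a) ^ i * (v ^ b) ^ j = u ^ ((a:ℤ) * i) * v ^ ((b:ℤ) * j) := by
    intro i j
    rw [← zpow_natCast u a, ← zpow_natCast v b, ← zpow_mul, ← zpow_mul]
  -- cardinality of H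
  have fHsurj : Function.Surjective
      (fun p : Fin (s/a) × Fin (s/b) => (⟨(u ^ a) ^ (p.1 : ℕ) * (v ^ b) ^ (p.2 : ℕ),
        mul_mem (pow_mem huaH _) (pow_mem hvbH _)⟩ : HH)) := by
    rintro ⟨g, hg⟩
    obtain ⟨i, j, rfl⟩ := (memH g).mp hg
    have hAz : ((s/a : ℕ) : ℤ) ≠ 0 := by exact_mod_cast hA.ne'
    have hBz : ((s/b : ℕ) : ℤ) ≠ 0 := by exact_mod_cast hB.ne'
    have hi : 0 ≤ i % ((s/a : ℕ) : ℤ) := Int.emod_nonneg i hAz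
    have hi' : i % ((s/a : ℕ) : ℤ) < ((s/a : ℕ) : ℤ) := Int.emod_lt_of_pos i (by exact_mod_cast hA)
    have hj : 0 ≤ j % ((s/b : ℕ) : ℤ) := Int.emod_nonneg j hBz
    have hj' : j % ((s/b : ℕ) : ℤ) < ((s/b : ℕ) : ℤ) := Int.emod_lt_of_pos j (by exact_mod_cast hB)
    refine ⟨(⟨(i % ((s/a:ℕ):ℤ)).toNat, by omega⟩, ⟨(j % ((s/b:ℕ):ℤ)).toNat, by omega⟩), ?_⟩
    refine Subtype.ext ?_
    simp only
    rw [← zpow_natCast (u^a), Int.toNat_of_nonneg hi, ← zpow_emod_eq huA,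
        ← zpow_natCast (v^b), Int.toNat_of_nonneg hj, ← zpow_emod_eq hvB]
  have fHinj : Function.Injective
      (fun p : Fin (s/a) × Fin (s/b) => (⟨(u ^ a) ^ (p.1 : ℕ) * (v ^ b) ^ (p.2 : ℕ),
        mul_mem (pow_mem huaH _) (pow_mem hvbH _)⟩ : HH)) := by
    rintro ⟨p1, p2⟩ ⟨q1, q2⟩ hpq
    have hval : (u ^ a) ^ (p1 : ℕ) * (v ^ b) ^ (p2 : ℕ)
        = (u ^ a) ^ (q1 : ℕ) * (v ^ b) ^ (q2 : ℕ) := congrArg Subtype.val hpq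
    have hz : (u ^ a) ^ ((p1 : ℕ) : ℤ) * (v ^ b) ^ ((p2 : ℕ) : ℤ)
        = (u ^ a) ^ ((q1 : ℕ) : ℤ) * (v ^ b) ^ ((q2 : ℕ) : ℤ) := by
      simpa [zpow_natCast] using hval
    have hcan := aux_cancel commab hz
    rw [hconv] at hcan
    obtain ⟨hd1, hd2⟩ := key _ _ hcan
    have hsa : (s:ℤ) = (a:ℤ) * ((s/a : ℕ):ℤ) := by exact_mod_cast (Nat.mul_div_cancel' had).symm
    have hsb : (s:ℤ) = (b:ℤ) * ((s/b : ℕ):ℤ) := by exact_mod_cast (Nat.mul_div_cancel' hbd).symm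
    have haZ : (a:ℤ) ≠ 0 := by exact_mod_cast ha.ne'
    have hbZ : (b:ℤ) ≠ 0 := by exact_mod_cast hb.ne'
    rw [hsa] at hd1
    rw [hsb] at hd2
    have d1 := (mul_dvd_mul_iff_left haZ).mp hd1
    have d2 := (mul_dvd_mul_iff_left hbZ).mp hd2
    have e1 : ((p1:ℕ):ℤ) - ((q1:ℕ):ℤ) = 0 := by
      refine Int.eq_zero_of_abs_lt_dvd d1 ?_
      rw [abs_sub_lt_iff]
      have h1 := p1.isLt; have h2 := q1.isLt
      constructor <;> (push_cast; omega)
    have e2 : ((p2:ℕ):ℤ) - ((q2:ℕ):ℤ) = 0 := by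
      refine Int.eq_zero_of_abs_lt_dvd d2 ?_
      rw [abs_sub_lt_iff]
      have h1 := p2.isLt; have h2 := q2.isLt
      constructor <;> (push_cast; omega)
    have hp1 : p1 = q1 := Fin.ext (by omega)
    have hp2 : p2 = q2 := Fin.ext (by omega)
    rw [hp1, hp2]
  have hHcard : Nat.card HH = (s / a) * (s / b) := by
    have := Nat.card_eq_of_bijective _ ⟨fHinj, fHsurj⟩
    simpa [Nat.card_eq_fintype_card] using this.symm
  -- conclusion: index
  have hindex : HH.index = 8 * a * b := by
    have hmul := HH.card_mul_index
    rw [hHcard, hG] at hmul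
    have hss : 8 * s ^ 2 = ((s/a) * (s/b)) * (8 * a * b) := by
      have e1 : a * (s/a) = s := Nat.mul_div_cancel' had
      have e2 : b * (s/b) = s := Nat.mul_div_cancel' hbd
      calc 8 * s ^ 2 = 8 * ((a * (s/a)) * (b * (s/b))) := by rw [e1, e2]; ring
        _ = ((s/a) * (s/b)) * (8 * a * b) := by ring
    rw [hss] at hmul
    exact Nat.eq_of_mul_eq_mul_left (Nat.mul_pos hA hB) hmul
  -- conclusion: core
  have hcore : HH.normalCore = ⊥ := by
    rw [eq_bot_iff]
    intro g hg
    have hgall : ∀ x : G, x * g * x⁻¹ ∈ HH := hg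
    have hgH : g ∈ HH := by
      have := hgall 1
      simpa using this
    obtain ⟨i, j, rfl⟩ := (memH g).mp hgH
    have hgc := hgall ρ1
    rw [conj_mul_zpow] at hgc
    have cua : ρ1 * (u ^ a) * ρ1⁻¹ = v ^ a := by rw [conj_pow', c1u]
    have cvb : ρ1 * (v ^ b) * ρ1⁻¹ = u ^ b := by rw [conj_pow', c1v]
    rw [cua, cvb] at hgc
    obtain ⟨k, l, hkl⟩ := (memH _).mp hgc
    -- rewrite everything in terms of u, v
    have hconv2 : ∀ (x : G) (n : ℕ) (m : ℤ), (x ^ n) ^ m = x ^ ((n:ℤ) * m) := by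
      intro x n m; rw [← zpow_natCast x n, ← zpow_mul]
    have hkl' : u ^ ((b:ℤ) * j) * v ^ ((a:ℤ) * i) = u ^ ((a:ℤ) * k) * v ^ ((b:ℤ) * l) := by
      rw [hconv2 v a i, hconv2 u b j, hconv2 u a k, hconv2 v b l] at hkl
      rw [((hcommC.symm.zpow_zpow ((a:ℤ)*i) ((b:ℤ)*j)).eq :
        v ^ ((a:ℤ)*i) * u ^ ((b:ℤ)*j) = u ^ ((b:ℤ)*j) * v ^ ((a:ℤ)*i))] at hkl
      exact hkl
    have hcan := aux_cancel hcommC hkl'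
    obtain ⟨hd1, hd2⟩ := key _ _ hcan
    -- s ∣ b*j - a*k  and  s ∣ a*i - b*l ; conclude s ∣ a*i and s ∣ b*j
    have haZ : (a:ℤ) ∣ (s:ℤ) := by exact_mod_cast had
    have hbZ : (b:ℤ) ∣ (s:ℤ) := by exact_mod_cast hbd
    have hlcmZ : ∀ m : ℤ, (a:ℤ) ∣ m → (b:ℤ) ∣ m → (s:ℤ) ∣ m := by
      intro m h1 h2
      have := Int.ofNat_dvd_left.mpr (Int.lcm_dvd (Int.dvd_natAbs.mpr h1) (Int.dvd_natAbs.mpr h2))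
      have hl : (Int.lcm (a:ℤ) (b:ℤ) : ℤ) = ((Nat.lcm a b : ℕ) : ℤ) := by
        simp [Int.lcm]
      rwa [hl, ← hlcm] at this
    have hsai : (s:ℤ) ∣ (a:ℤ) * i := by
      refine hlcmZ _ (Dvd.intro i rfl) ?_
      have h1 : (b:ℤ) ∣ ((a:ℤ) * i - (b:ℤ) * l) := dvd_trans hbZ hd2
      have h2 : (b:ℤ) ∣ (b:ℤ) * l := Dvd.intro l rfl
      have := dvd_add h1 h2
      simpa using this
    have hsbj : (s:ℤ) ∣ (b:ℤ) * j := by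
      refine hlcmZ _ ?_ (Dvd.intro j rfl)
      have h1 : (a:ℤ) ∣ ((b:ℤ) * j - (a:ℤ) * k) := dvd_trans haZ hd1
      have h2 : (a:ℤ) ∣ (a:ℤ) * k := Dvd.intro k rfl
      have := dvd_add h1 h2
      simpa using this
    have : (u ^ a) ^ i * (v ^ b) ^ j = 1 := by
      rw [hconv, hzero u huZ _ hsai, hzero v hvZ _ hsbj, one_mul]
    simp [Subgroup.mem_bot, this]
  exact ⟨hcore, hindex⟩
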